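/- Weak parabolic maximum principle (Proposition 3.6). Assume the family of conductances (C⁽ⁿ⁾) satisfies (K1) and (Sob) for some α ∈ (0,2] with α < d, σ > 0 and θ ∈ (d/α, ∞), and that sup_x Σ_y C_s⁽ⁿ⁾(x,y) < ∞ for each n. Let n ∈ ℕ, T > 0, σ/n < R ≤ 1 and let B_R⁽ⁿ⁾ ⊂ n⁻¹ℤᵈ be a discrete ball of radius R. Let u be a subsolution of ∂ₜu − L⁽ⁿ⁾u = 0 in (0,T) × B_R⁽ⁿ⁾ such that the positive part u₊(t) belongs to L²_c(B_R⁽ⁿ⁾) for every t ∈ (0,T), ‖u₊(t)‖_{L²(n⁻¹ℤᵈ)} → 0 as t ↘ 0, and u(0,·) ≤ 0 on B_R⁽ⁿ⁾. Then u ≤ 0 everywhere on (0,T) × B_R⁽ⁿ⁾. -/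

import Mathlib

open scoped BigOperators
open MeasureTheory Set

noncomputable section

/-- Lattice points of `n⁻¹ℤᵈ`, indexed by their integer coordinates. -/
abbrev Zd (d : ℕ) := Fin d → ℤ

/-- The point of `ℝᵈ` corresponding to the lattice point `v ∈ n⁻¹ℤᵈ`. -/
def pt (d n : ℕ) (v : Zd d) : EuclideanSpace ℝ (Fin d) := WithLp.toLp 2 (fun i => (v i : ℝ) / (n : ℝ))

/-- The discrete ball `B_r⁽ⁿ⁾(x₀)` in `n⁻¹ℤᵈ` (Euclidean distance). -/
def dBall (d n : ℕ) (x₀ : Zd d) (r : ℝ) : Set (Zd d) :=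
  {x : Zd d | dist (pt d n x) (pt d n x₀) < r}

/-- The lattice unit step in direction `i` (corresponding to `eᵢ/n` after rescaling). -/
def latStep {d : ℕ} (i : Fin d) : Zd d := fun j => if j = i then 1 else 0

/-- Symmetric part of a conductance. -/
def symPart {d : ℕ} (C : Zd d → Zd d → ℝ) (x y : Zd d) : ℝ := (C x y + C y x) / 2

/-- Antisymmetric part of a conductance. -/
def asymPart {d : ℕ} (C : Zd d → Zd d → ℝ) (x y : Zd d) : ℝ := (C x y - C y x) / 2

/-- A conductance: nonnegative, vanishing on the diagonal. -/
def IsConductance {d : ℕ} (C : Zd d → Zd d → ℝ) : Prop :=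
  (∀ x y, 0 ≤ C x y) ∧ (∀ x, C x x = 0)

/-- Membership in `L²(n⁻¹ℤᵈ)`. -/
def MemL2 {d : ℕ} (u : Zd d → ℝ) : Prop := Summable fun x : Zd d => (u x) ^ 2

/-- Squared `L²(n⁻¹ℤᵈ)` norm. -/
def l2normSq (d n : ℕ) (u : Zd d → ℝ) : ℝ := ((n : ℝ) ^ d)⁻¹ * ∑' x : Zd d, (u x) ^ 2

/-- `L²(n⁻¹ℤᵈ)` norm. -/
def l2norm (d n : ℕ) (u : Zd d → ℝ) : ℝ := Real.sqrt (l2normSq d n u)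

/-- `L^p(n⁻¹ℤᵈ)` norm. -/
def lpNorm (d n : ℕ) (p : ℝ) (f : Zd d → ℝ) : ℝ :=
  (((n : ℝ) ^ d)⁻¹ * ∑' x : Zd d, |f x| ^ p) ^ (1 / p)

/-- The bilinear form `ℰ⁽ⁿ⁾(u,v) = 2n^{α−d} Σ_{x,y} (u(x)−u(y))v(x)C(x,y)`. -/
def EForm (d n : ℕ) (α : ℝ) (C : Zd d → Zd d → ℝ) (u v : Zd d → ℝ) : ℝ :=
  2 * (n : ℝ) ^ α * ((n : ℝ) ^ d)⁻¹ *
    ∑' x : Zd d, ∑' y : Zd d, (u x - u y) * v x * C x y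

/-- The symmetric form `ℰ^{(n),J}(v,v) = n^{α−d} Σ_{x,y} (v(x)−v(y))² J(x,y)`. -/
def ESym (d n : ℕ) (α : ℝ) (J : Zd d → Zd d → ℝ) (v : Zd d → ℝ) : ℝ :=
  (n : ℝ) ^ α * ((n : ℝ) ^ d)⁻¹ *
    ∑' x : Zd d, ∑' y : Zd d, (v x - v y) ^ 2 * J x y

/-- The restricted symmetric form `ℰ^{(n),J}_B(v,v)`. -/
def ESymOn (d n : ℕ) (α : ℝ) (J : Zd d → Zd d → ℝ) (B : Set (Zd d)) (v : Zd d → ℝ) : ℝ :=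
  (n : ℝ) ^ α * ((n : ℝ) ^ d)⁻¹ *
    ∑' x : B, ∑' y : B, (v (x : Zd d) - v (y : Zd d)) ^ 2 * J (x : Zd d) (y : Zd d)

/-- Average `[v]_B` of `v` over a (finite) set `B ⊂ n⁻¹ℤᵈ` with respect to `μ⁽ⁿ⁾`. -/
def ballAvg (d : ℕ) (B : Set (Zd d)) (v : Zd d → ℝ) : ℝ :=
  (Nat.card B : ℝ)⁻¹ * ∑' x : B, v (x : Zd d)

/-- The measure `μ⁽ⁿ⁾(B) = n^{−d} · #B`. -/
def muOf (d n : ℕ) (B : Set (Zd d)) : ℝ := ((n : ℝ) ^ d)⁻¹ * (Nat.card B : ℝ)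

/-- The indicator function `𝟙_B`. -/
def indic {d : ℕ} (B : Set (Zd d)) : Zd d → ℝ := B.indicator fun _ => (1 : ℝ)

/-- Assumption (C-Tail0) for a family of symmetric kernels. -/
def CTail0 (d : ℕ) (α : ℝ) (K : ℕ → Zd d → Zd d → ℝ) : Prop :=
  ∃ c > 0, ∀ n : ℕ, 0 < n → ∀ r : ℝ, 0 < r → r ≤ 1 → ∀ x : Zd d,
    (n : ℝ) ^ α * ∑' y : {y : Zd d // y ∉ dBall d n x r}, K n x (y : Zd d) ≤ c * r ^ (-α)

/-- Assumption (C-Tail∞). -/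
def CTailInf (d : ℕ) (α : ℝ) (C : ℕ → Zd d → Zd d → ℝ) : Prop :=
  ∃ c > 0, ∃ δ : ℝ, 0 < δ ∧ ∀ n : ℕ, 0 < n → ∀ r : ℝ, 1 < r → ∀ x : Zd d,
    (n : ℝ) ^ α * ∑' y : {y : Zd d // y ∉ dBall d n x r}, C n x (y : Zd d) ≤ c * r ^ (-δ)

/-- Assumption (K1). -/
def K1 (d : ℕ) (α σ θ : ℝ) (C : ℕ → Zd d → Zd d → ℝ) : Prop :=
  ∃ A > 0, ∃ J : ℕ → Zd d → Zd d → ℝ,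
    (∀ n x y, J n x y = J n y x) ∧ (∀ n x y, 0 ≤ J n x y) ∧ CTail0 d α J ∧
    (∀ n : ℕ, 0 < n →
      lpNorm d n θ
        (fun x => (n : ℝ) ^ α * ∑' y : Zd d, (asymPart (C n) x y) ^ 2 / J n x y) ≤ A) ∧
    (∀ n : ℕ, 0 < n → ∀ x₀ : Zd d, ∀ r : ℝ, σ / (2 * n) < r → ∀ v : Zd d → ℝ,
      ESymOn d n α (J n) (dBall d n x₀ (2 * r)) v
        ≤ A * ESymOn d n α (symPart (C n)) (dBall d n x₀ (2 * r)) v)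

/-- Assumption (K2). -/
def K2 (d : ℕ) (α σ : ℝ) (C : ℕ → Zd d → Zd d → ℝ) : Prop :=
  ∃ CC > 0, ∃ D : ℝ, D < 1 ∧ ∃ j : ℕ → Zd d → Zd d → ℝ,
    (∀ n x y, j n x y = j n y x) ∧ (∀ n x y, 0 ≤ j n x y) ∧
    (∀ n : ℕ, 0 < n → ∀ x₀ x y : Zd d,
      x ∈ dBall d n x₀ 2 → y ∈ dBall d n x₀ 2 → (1 - D) * j n x y ≤ C n x y) ∧
    (∀ n : ℕ, 0 < n → ∀ x₀ : Zd d, ∀ r : ℝ, σ / (2 * n) < r → r ≤ 1 → ∀ v : Zd d → ℝ,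
      ESymOn d n α (symPart (C n)) (dBall d n x₀ (2 * r)) v
        ≤ CC * ESymOn d n α (j n) (dBall d n x₀ (2 * r)) v)

/-- Assumption (Poinc). -/
def Poinc (d : ℕ) (α σ : ℝ) (C : ℕ → Zd d → Zd d → ℝ) : Prop :=
  ∃ c > 0, ∀ n : ℕ, 0 < n → ∀ x₀ : Zd d, ∀ r : ℝ, σ / (2 * n) < r → r ≤ 1 →
    ∀ v : Zd d → ℝ,
      ((n : ℝ) ^ d)⁻¹ *
          ∑' x : dBall d n x₀ r, (v (x : Zd d) - ballAvg d (dBall d n x₀ r) v) ^ 2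
        ≤ c * r ^ α * ESymOn d n α (symPart (C n)) (dBall d n x₀ r) v

/-- Assumption (Sob). -/
def Sob (d : ℕ) (α : ℝ) (C : ℕ → Zd d → Zd d → ℝ) : Prop :=
  ∃ c > 0, ∀ n : ℕ, 0 < n → ∀ v : Zd d → ℝ,
    lpNorm d n ((d : ℝ) / ((d : ℝ) - α)) (fun x => (v x) ^ 2)
      ≤ c * ESym d n α (symPart (C n)) v

/-- Membership in `L²_c(B)`: square-summable and vanishing outside `B`. -/
def MemL2c {d : ℕ} (B : Set (Zd d)) (φ : Zd d → ℝ) : Prop :=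
  MemL2 φ ∧ ∀ x, x ∉ B → φ x = 0

/-- The function space `V(B|n⁻¹ℤᵈ)`. -/
def VSpace {d : ℕ} (C : Zd d → Zd d → ℝ) (B : Set (Zd d)) (f : Zd d → ℝ) : Prop :=
  Summable (fun x : B => (f (x : Zd d)) ^ 2) ∧
  Summable (fun p : B × Zd d => (f (p.1 : Zd d) - f p.2) ^ 2 * symPart C (p.1 : Zd d) p.2)

/-- Supersolution of `∂ₜu − L⁽ⁿ⁾u = 0` in `I × B` (with time derivative `u'`). -/
def ParabolicSupersol (d n : ℕ) (α : ℝ) (C : Zd d → Zd d → ℝ) (I : Set ℝ)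
    (B : Set (Zd d)) (u u' : ℝ → Zd d → ℝ) : Prop :=
  (∀ t ∈ I, VSpace C B (u t)) ∧
  (∀ x ∈ B, ∀ t ∈ I, HasDerivAt (fun s => u s x) (u' t x) t) ∧
  (∀ t ∈ I, ∀ φ : Zd d → ℝ, MemL2c B φ → (∀ x, φ x ≤ 0) →
    ((n : ℝ) ^ d)⁻¹ * (∑' x : B, u' t (x : Zd d) * φ (x : Zd d))
      + EForm d n α C (u t) φ ≤ 0)

/-- Subsolution of `∂ₜu − L⁽ⁿ⁾u = 0` in `I × B` (with time derivative `u'`). -/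
def ParabolicSubsol (d n : ℕ) (α : ℝ) (C : Zd d → Zd d → ℝ) (I : Set ℝ)
    (B : Set (Zd d)) (u u' : ℝ → Zd d → ℝ) : Prop :=
  (∀ t ∈ I, MemL2 (u t)) ∧
  (∀ x ∈ B, ∀ t ∈ I, HasDerivAt (fun s => u s x) (u' t x) t) ∧
  (∀ t ∈ I, ∀ φ : Zd d → ℝ, MemL2c B φ → (∀ x, 0 ≤ φ x) →
    ((n : ℝ) ^ d)⁻¹ * (∑' x : B, u' t (x : Zd d) * φ (x : Zd d))
      + EForm d n α C (u t) φ ≤ 0)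

/-- Solution of `∂ₜu − L⁽ⁿ⁾u = 0` in `I × B` (with time derivative `u'`). -/
def ParabolicSol (d n : ℕ) (α : ℝ) (C : Zd d → Zd d → ℝ) (I : Set ℝ)
    (B : Set (Zd d)) (u u' : ℝ → Zd d → ℝ) : Prop :=
  (∀ x ∈ B, ∀ t ∈ I, HasDerivAt (fun s => u s x) (u' t x) t) ∧
  (∀ t ∈ I, ∀ φ : Zd d → ℝ, MemL2c B φ →
    ((n : ℝ) ^ d)⁻¹ * (∑' x : B, u' t (x : Zd d) * φ (x : Zd d))
      + EForm d n α C (u t) φ = 0)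

/-- Supersolution of `−L⁽ⁿ⁾u = 0` in `B`. -/
def EllipticSupersol (d n : ℕ) (α : ℝ) (C : Zd d → Zd d → ℝ) (B : Set (Zd d))
    (u : Zd d → ℝ) : Prop :=
  VSpace C B u ∧
  ∀ φ : Zd d → ℝ, MemL2c B φ → (∀ x, φ x ≤ 0) → EForm d n α C u φ ≤ 0

/-- Solution of `−L⁽ⁿ⁾u = 0` in `B`. -/
def EllipticSol (d n : ℕ) (α : ℝ) (C : Zd d → Zd d → ℝ) (B : Set (Zd d))
    (u : Zd d → ℝ) : Prop :=
  ∀ φ : Zd d → ℝ, MemL2c B φ → EForm d n α C u φ = 0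

/-- The generator `L⁽ⁿ⁾u(x) = 2n^α Σ_y (u(y)−u(x))C(x,y)`, pointwise. -/
def Lgen (d n : ℕ) (α : ℝ) (C : Zd d → Zd d → ℝ) (u : Zd d → ℝ) (x : Zd d) : ℝ :=
  2 * (n : ℝ) ^ α * ∑' y : Zd d, (u y - u x) * C x y

/-- `P : ℝ → (n⁻¹ℤᵈ → ℝ)` is the heat semigroup orbit `t ↦ exp(tL⁽ⁿ⁾)f` of `f`:
it is `L²`-valued, starts at `f` and solves the (pointwise) ODE `∂ₜ P = L⁽ⁿ⁾P`.
For the bounded operator `L⁽ⁿ⁾` this characterizes `exp(tL⁽ⁿ⁾)f` uniquely. -/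
def IsHeatSemigroup (d n : ℕ) (α : ℝ) (C : Zd d → Zd d → ℝ) (f : Zd d → ℝ)
    (P : ℝ → Zd d → ℝ) : Prop :=
  P 0 = f ∧ (∀ t, MemL2 (P t)) ∧
  ∀ t : ℝ, ∀ x : Zd d, HasDerivAt (fun s => P s x) (Lgen d n α C (P t) x) t

/-- The killed generator `(L^B u)(x) = 𝟙_B(x)·2n^α Σ_y (u(y)𝟙_B(y) − u(x))C(x,y)`. -/
def LgenKilled (d n : ℕ) (α : ℝ) (C : Zd d → Zd d → ℝ) (B : Set (Zd d))
    (u : Zd d → ℝ) (x : Zd d) : ℝ :=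
  B.indicator
    (fun z => 2 * (n : ℝ) ^ α * ∑' y : Zd d, (B.indicator u y - u z) * C z y) x

/-- `P` is the killed heat semigroup orbit `t ↦ exp(tL^B)f` of `f`. -/
def IsKilledHeatSemigroup (d n : ℕ) (α : ℝ) (C : Zd d → Zd d → ℝ) (B : Set (Zd d))
    (f : Zd d → ℝ) (P : ℝ → Zd d → ℝ) : Prop :=
  P 0 = f ∧ (∀ t, MemL2 (P t)) ∧
  ∀ t : ℝ, ∀ x : Zd d, HasDerivAt (fun s => P s x) (LgenKilled d n α C B (P t) x) t


section Helpers

private lemma maxsq_hasDerivAt (a : ℝ) :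
    HasDerivAt (fun s : ℝ => max s 0 ^ 2) (2 * max a 0) a := by
  rcases lt_trichotomy a 0 with h | h | h
  · have he : (fun s : ℝ => max s 0 ^ 2) =ᶠ[nhds a] fun _ => (0:ℝ) := by
      filter_upwards [Iio_mem_nhds h] with s hs
      simp [max_eq_right (le_of_lt (mem_Iio.mp hs))]
    rw [max_eq_right (le_of_lt h), mul_zero]
    exact HasDerivAt.congr_of_eventuallyEq (hasDerivAt_const a 0) he
  · subst h
    rw [max_self, mul_zero]
    rw [hasDerivAt_iff_isLittleO]
    rw [Asymptotics.isLittleO_iff]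
    intro c hc
    filter_upwards [Metric.ball_mem_nhds (0:ℝ) hc] with s hs
    simp only [Metric.mem_ball, Real.dist_eq, sub_zero] at hs
    have h1 : ‖max s 0 ^ 2 - max (0:ℝ) 0 ^ 2 - (s - 0) • (0:ℝ)‖ ≤ |s| * |s| := by
      simp only [max_self, smul_zero, sub_zero, Real.norm_eq_abs]
      rcases le_or_gt s 0 with hs' | hs'
      · simp only [max_eq_right hs']
        simp
        nlinarith [abs_nonneg s, sq_abs s]
      · rw [max_eq_left (le_of_lt hs'), abs_mul_abs_self]
        simp only [ne_eq, OfNat.ofNat_ne_zero, not_false_eq_true, zero_pow, sub_zero]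
        rw [abs_of_nonneg (sq_nonneg s), sq]
    refine h1.trans ?_
    rw [Real.norm_eq_abs, sub_zero]
    exact mul_le_mul_of_nonneg_right (le_of_lt hs) (abs_nonneg s)
  · have he : (fun s : ℝ => max s 0 ^ 2) =ᶠ[nhds a] fun s => s ^ 2 := by
      filter_upwards [Ioi_mem_nhds h] with s hs
      simp [max_eq_left (le_of_lt (mem_Ioi.mp hs))]
    rw [max_eq_left (le_of_lt h)]
    have h2 : HasDerivAt (fun s : ℝ => s ^ 2) (2 * a) a := by
      simpa using (hasDerivAt_pow 2 a)
    exact h2.congr_of_eventuallyEq he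

private lemma dBall_finite (d n : ℕ) (hn : 0 < n) (x₀ : Zd d) (R : ℝ) (hR : R ≤ 1) :
    (dBall d n x₀ R).Finite := by
  have hsub : dBall d n x₀ R ⊆ Set.univ.pi (fun i => Set.Icc (x₀ i - n) (x₀ i + n)) := by
    intro x hx
    rw [Set.mem_univ_pi]
    intro i
    have hx' : dist (pt d n x) (pt d n x₀) < R := hx
    have hcoord : dist (pt d n x i) (pt d n x₀ i) ≤ dist (pt d n x) (pt d n x₀) := by
      rw [EuclideanSpace.dist_eq]
      have h1 : dist (pt d n x i) (pt d n x₀ i) ^ 2 ≤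
          ∑ j, dist (pt d n x j) (pt d n x₀ j) ^ 2 :=
        Finset.single_le_sum (f := fun j => dist (pt d n x j) (pt d n x₀ j) ^ 2)
          (fun j _ => sq_nonneg _) (Finset.mem_univ i)
      calc dist (pt d n x i) (pt d n x₀ i)
          = Real.sqrt (dist (pt d n x i) (pt d n x₀ i) ^ 2) := (Real.sqrt_sq dist_nonneg).symm
        _ ≤ _ := Real.sqrt_le_sqrt h1
    have hnR : (0:ℝ) < n := by exact_mod_cast hn
    have h2 : |(x i : ℝ) / n - (x₀ i : ℝ) / n| < 1 := by
      have h := lt_of_le_of_lt hcoord hx'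
      rw [Real.dist_eq] at h
      calc |(x i : ℝ) / n - (x₀ i : ℝ) / n| < R := by simpa [pt] using h
        _ ≤ 1 := hR
    have h3 : |(x i : ℝ) - (x₀ i : ℝ)| < n := by
      rw [div_sub_div_same, abs_div, abs_of_pos hnR, div_lt_one hnR] at h2
      exact h2
    have h4 : |x i - x₀ i| ≤ n := by
      have h5 : (|x i - x₀ i| : ℝ) < n := by
        push_cast [abs_sub_comm]
        rw [abs_sub_comm]
        exact_mod_cast h3
      exact_mod_cast le_of_lt h5
    rw [abs_le] at h4
    constructor <;> omega
  exact Set.Finite.subset (Set.Finite.pi (fun i => Set.finite_Icc _ _)) hsub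

private lemma tsum_subtype_eq_sum {β : Type*} (B : Set β) (hB : B.Finite) (f : β → ℝ) :
    ∑' x : B, f (x : β) = ∑ x ∈ hB.toFinset, f x := by
  rw [tsum_subtype]
  rw [tsum_eq_sum (s := hB.toFinset) (by
    intro b hb
    exact Set.indicator_of_notMem (by simpa using hb) f)]
  exact Finset.sum_congr rfl fun x hx => Set.indicator_of_mem (hB.mem_toFinset.mp hx) f

private lemma scalar_key (p q : ℝ) : -(1/2) * max q 0 ^ 2 ≤ (p - q) * max p 0 := by
  have hA : max p 0 * (max p 0 - p) = 0 := by
    rcases le_or_gt p 0 with h | h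
    · simp [max_eq_right h]
    · simp [max_eq_left (le_of_lt h)]
  nlinarith [sq_nonneg (max p 0 - max q 0), le_max_right q 0, le_max_left q 0,
    le_max_right p 0, mul_nonneg (le_max_right p 0) (le_max_right q 0)]

private lemma eform_lower_bound (d n : ℕ) (α : ℝ) (hn : 0 < n) (Cn : Zd d → Zd d → ℝ)
    (hpos : ∀ x y, 0 ≤ Cn x y) (M : ℝ) (hM0 : 0 ≤ M)
    (hsum : ∀ x, Summable fun y => Cn x y) (hbd2 : ∀ x y, Cn x y ≤ 2 * M)
    (Bf : Finset (Zd d)) (hcol : ∀ y, ∑ x ∈ Bf, Cn x y ≤ 2 * M)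
    (v : Zd d → ℝ) (hv : Summable fun y => v y ^ 2)
    (ha : Summable fun y => max (v y) 0 ^ 2)
    (haB : ∀ x, x ∉ Bf → max (v x) 0 = 0) :
    -(2 * M * (n : ℝ) ^ α * ((n : ℝ) ^ d)⁻¹ * ∑ x ∈ Bf, max (v x) 0 ^ 2)
      ≤ EForm d n α Cn v (fun x => max (v x) 0) := by
  have hnR : (0:ℝ) < n := by exact_mod_cast hn
  have habs : ∀ (x : Zd d) (f : Zd d → ℝ), (Summable fun y => f y ^ 2) →
      Summable (fun y => f y * Cn x y) := by
    intro x f hf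
    apply Summable.of_abs
    apply Summable.of_nonneg_of_le (fun y => abs_nonneg _)
      (g := fun y => |f y * Cn x y|) (f := fun y => f y ^ 2 + 2 * M * Cn x y)
      (fun y => ?_) (hf.add ((hsum x).mul_left (2 * M)))
    show |f y * Cn x y| ≤ f y ^ 2 + 2 * M * Cn x y
    rw [abs_mul, abs_of_nonneg (hpos x y)]
    nlinarith [sq_nonneg (|f y| - Cn x y), sq_abs (f y), hpos x y, hbd2 x y, abs_nonneg (f y)]
  have sU : ∀ x, Summable (fun y => v y * Cn x y) := fun x => habs x _ hv
  have s1 : ∀ x, Summable (fun y => (v x - v y) * max (v x) 0 * Cn x y) := fun x => by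
    have h := ((hsum x).mul_left (v x * max (v x) 0)).sub ((sU x).mul_left (max (v x) 0))
    exact h.congr fun y => by ring
  have s3 : ∀ x, Summable (fun y => max (v y) 0 ^ 2 * Cn x y) := fun x =>
    Summable.of_nonneg_of_le (fun y => mul_nonneg (sq_nonneg _) (hpos x y))
      (fun y => mul_le_mul_of_nonneg_left (hbd2 x y) (sq_nonneg _)) (ha.mul_right (2 * M))
  have hTx : ∀ x, -(1/2 : ℝ) * ∑' y, max (v y) 0 ^ 2 * Cn x y
      ≤ ∑' y, (v x - v y) * max (v x) 0 * Cn x y := by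
    intro x
    have hpt : ∀ y, -(1/2 : ℝ) * (max (v y) 0 ^ 2 * Cn x y)
        ≤ (v x - v y) * max (v x) 0 * Cn x y := by
      intro y
      have h := mul_le_mul_of_nonneg_right (scalar_key (v x) (v y)) (hpos x y)
      calc -(1/2 : ℝ) * (max (v y) 0 ^ 2 * Cn x y)
          = -(1/2) * max (v y) 0 ^ 2 * Cn x y := by ring
        _ ≤ (v x - v y) * max (v x) 0 * Cn x y := h
    have h := Summable.tsum_le_tsum hpt ((s3 x).mul_left (-(1/2 : ℝ))) (s1 x)
    rwa [tsum_mul_left] at h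
  have hzero : ∀ x, x ∉ Bf → (∑' y, (v x - v y) * max (v x) 0 * Cn x y) = 0 := by
    intro x hx
    simp [haB x hx]
  have hswap : ∑ x ∈ Bf, ∑' y, max (v y) 0 ^ 2 * Cn x y
      ≤ 2 * M * ∑ x ∈ Bf, max (v x) 0 ^ 2 := by
    rw [← Summable.tsum_finsetSum (fun x _ => s3 x)]
    have h1 : ∀ y, ∑ x ∈ Bf, max (v y) 0 ^ 2 * Cn x y ≤ max (v y) 0 ^ 2 * (2 * M) := by
      intro y
      rw [← Finset.mul_sum]
      exact mul_le_mul_of_nonneg_left (hcol y) (sq_nonneg _)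
    have hsums : Summable (fun y => ∑ x ∈ Bf, max (v y) 0 ^ 2 * Cn x y) :=
      Summable.of_nonneg_of_le
        (fun y => Finset.sum_nonneg fun x _ => mul_nonneg (sq_nonneg _) (hpos x y))
        h1 (ha.mul_right _)
    calc ∑' y, ∑ x ∈ Bf, max (v y) 0 ^ 2 * Cn x y
        ≤ ∑' y, max (v y) 0 ^ 2 * (2 * M) := Summable.tsum_le_tsum h1 hsums (ha.mul_right _)
      _ = (∑' y, max (v y) 0 ^ 2) * (2 * M) := tsum_mul_right
      _ = 2 * M * ∑ x ∈ Bf, max (v x) 0 ^ 2 := by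
          rw [tsum_eq_sum (s := Bf) (fun x hx => by rw [haB x hx]; ring)]
          ring
  have hSlow : -(M * ∑ x ∈ Bf, max (v x) 0 ^ 2)
      ≤ ∑ x ∈ Bf, ∑' y, (v x - v y) * max (v x) 0 * Cn x y := by
    have h1 : ∑ x ∈ Bf, (-(1/2 : ℝ) * ∑' y, max (v y) 0 ^ 2 * Cn x y)
        ≤ ∑ x ∈ Bf, ∑' y, (v x - v y) * max (v x) 0 * Cn x y :=
      Finset.sum_le_sum fun x _ => hTx x
    have h2 : ∑ x ∈ Bf, (-(1/2 : ℝ) * ∑' y, max (v y) 0 ^ 2 * Cn x y)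
        = -(1/2 : ℝ) * ∑ x ∈ Bf, ∑' y, max (v y) 0 ^ 2 * Cn x y :=
      (Finset.mul_sum _ _ _).symm
    rw [h2] at h1
    linarith [hswap]
  have hEFeq : EForm d n α Cn v (fun x => max (v x) 0) =
      2 * (n:ℝ) ^ α * ((n:ℝ) ^ d)⁻¹ *
        ∑ x ∈ Bf, ∑' y, (v x - v y) * max (v x) 0 * Cn x y := by
    rw [EForm, tsum_eq_sum hzero]
  rw [hEFeq]
  have hc : (0:ℝ) ≤ 2 * (n:ℝ) ^ α * ((n:ℝ) ^ d)⁻¹ := by positivity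
  have h := mul_le_mul_of_nonneg_left hSlow hc
  calc -(2 * M * (n:ℝ)^α * ((n:ℝ)^d)⁻¹ * ∑ x ∈ Bf, max (v x) 0 ^ 2)
      = (2 * (n:ℝ)^α * ((n:ℝ)^d)⁻¹) * (-(M * ∑ x ∈ Bf, max (v x) 0 ^ 2)) := by ring
    _ ≤ _ := h

end Helpers

set_option maxHeartbeats 1000000 in
/-- **Proposition 3.6 (weak parabolic maximum principle).** -/
theorem weak_parabolic_maximum_principle
    (d : ℕ) (hd : 1 ≤ d) (α σ θ : ℝ)
    (hα0 : 0 < α) (hα2 : α ≤ 2) (hαd : α < (d : ℝ)) (hσ : 0 < σ)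
    (hθ : (d : ℝ) / α < θ)
    (C : ℕ → Zd d → Zd d → ℝ) (hC : ∀ n, IsConductance (C n))
    (hK1 : K1 d α σ θ C) (hSob : Sob d α C)
    (hbd : ∀ n : ℕ, 0 < n → ∃ M : ℝ, ∀ x : Zd d,
      Summable (fun y : Zd d => symPart (C n) x y) ∧
        ∑' y : Zd d, symPart (C n) x y ≤ M)
    (n : ℕ) (hn : 0 < n) (T : ℝ) (hT : 0 < T)
    (R : ℝ) (hR1 : σ / n < R) (hR2 : R ≤ 1) (x₀ : Zd d)
    (u u' : ℝ → Zd d → ℝ)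
    (hsub : ParabolicSubsol d n α (C n) (Set.Ioo 0 T) (dBall d n x₀ R) u u')
    (hposL2c : ∀ t ∈ Set.Ioo (0 : ℝ) T,
      MemL2c (dBall d n x₀ R) (fun x => max (u t x) 0))
    (hinitnorm : Filter.Tendsto (fun t => l2norm d n (fun x => max (u t x) 0))
      (nhdsWithin 0 (Set.Ioi 0)) (nhds 0))
    (hinit : ∀ x ∈ dBall d n x₀ R, u 0 x ≤ 0) :
    ∀ t ∈ Set.Ioo (0 : ℝ) T, ∀ x ∈ dBall d n x₀ R, u t x ≤ 0 := by
  obtain ⟨M, hM⟩ := hbd n hn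
  have hCpos : ∀ x y, 0 ≤ C n x y := (hC n).1
  have hsym_nonneg : ∀ x y, 0 ≤ symPart (C n) x y := fun x y => by
    have h1 := hCpos x y; have h2 := hCpos y x
    unfold symPart; linarith
  have hM0 : 0 ≤ M :=
    le_trans (tsum_nonneg fun y => hsym_nonneg x₀ y) (hM x₀).2
  have hnR : (0:ℝ) < n := by exact_mod_cast hn
  have hnd : (0:ℝ) < ((n:ℝ)^d) := by positivity
  have hna : (0:ℝ) < (n:ℝ)^α := Real.rpow_pos_of_pos hnR α
  have hBfin : (dBall d n x₀ R).Finite := dBall_finite d n hn x₀ R hR2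
  set Bf := hBfin.toFinset with hBfdef
  have hmem : ∀ x : Zd d, x ∈ Bf ↔ x ∈ dBall d n x₀ R := fun x => hBfin.mem_toFinset
  have hCle : ∀ x y, C n x y ≤ 2 * symPart (C n) x y := fun x y => by
    have h1 := hCpos y x; unfold symPart; linarith
  have hCsum : ∀ x, Summable (fun y => C n x y) :=
    fun x => Summable.of_nonneg_of_le (hCpos x) (hCle x) ((hM x).1.mul_left 2)
  have hCbd : ∀ x y, C n x y ≤ 2 * M := fun x y => by
    have h1 : symPart (C n) x y ≤ ∑' z, symPart (C n) x z :=
      Summable.le_tsum (hM x).1 y (fun z _ => hsym_nonneg x z)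
    have h2 := (hM x).2
    have h3 := hCle x y
    linarith
  have hcol : ∀ y, ∑ x ∈ Bf, C n x y ≤ 2 * M := fun y => by
    have h1 : ∀ x, C n x y ≤ 2 * symPart (C n) y x := fun x => by
      have := hCpos y x; unfold symPart; linarith
    calc ∑ x ∈ Bf, C n x y ≤ ∑ x ∈ Bf, 2 * symPart (C n) y x :=
          Finset.sum_le_sum fun x _ => h1 x
      _ = 2 * ∑ x ∈ Bf, symPart (C n) y x := (Finset.mul_sum _ _ _).symm
      _ ≤ 2 * ∑' x, symPart (C n) y x := by
          have := Summable.sum_le_tsum Bf (fun x _ => hsym_nonneg y x) (hM y).1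
          linarith
      _ ≤ 2 * M := by have := (hM y).2; linarith
  set K := 4 * M * (n:ℝ)^α with hKdef
  have hK0 : 0 ≤ K := by positivity
  set F : ℝ → ℝ := fun t => ((n:ℝ)^d)⁻¹ * ∑ x ∈ Bf, max (u t x) 0 ^ 2 with hFdef
  -- key derivative estimate
  have key : ∀ t ∈ Set.Ioo (0:ℝ) T, ∃ D : ℝ, HasDerivAt F D t ∧ D ≤ K * F t := by
    intro t ht
    obtain ⟨haL2, haB⟩ := hposL2c t ht
    have ha2sum : Summable (fun x => max (u t x) 0 ^ 2) := haL2
    have hu2sum : Summable (fun x => u t x ^ 2) := hsub.1 t ht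
    have haBf : ∀ x, x ∉ Bf → max (u t x) 0 = 0 := fun x hx =>
      haB x (fun hmemB => hx ((hmem x).2 hmemB))
    have hDer : HasDerivAt F (((n:ℝ)^d)⁻¹ * ∑ x ∈ Bf, 2 * max (u t x) 0 * u' t x) t := by
      rw [hFdef]
      apply HasDerivAt.const_mul
      apply HasDerivAt.fun_sum
      intro x hx
      have h1 := hsub.2.1 x ((hmem x).1 hx) t ht
      have h2 := (maxsq_hasDerivAt (u t x)).comp t h1
      exact h2
    refine ⟨_, hDer, ?_⟩
    have hsol := hsub.2.2 t ht (fun x => max (u t x) 0) ⟨haL2, haB⟩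
      (fun x => le_max_right _ _)
    have htsub : (∑' x : (dBall d n x₀ R), u' t (x : Zd d) * max (u t (x : Zd d)) 0)
        = ∑ x ∈ Bf, u' t x * max (u t x) 0 :=
      tsum_subtype_eq_sum (dBall d n x₀ R) hBfin (fun x => u' t x * max (u t x) 0)
    rw [htsub] at hsol
    have hEF := eform_lower_bound d n α hn (C n) hCpos M hM0 hCsum hCbd Bf hcol
      (u t) hu2sum ha2sum haBf
    have hFt : F t = ((n:ℝ)^d)⁻¹ * ∑ x ∈ Bf, max (u t x) 0 ^ 2 := by rw [hFdef]
    have hDeq : ∑ x ∈ Bf, 2 * max (u t x) 0 * u' t x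
        = 2 * ∑ x ∈ Bf, u' t x * max (u t x) 0 := by
      rw [Finset.mul_sum]
      exact Finset.sum_congr rfl fun x _ => by ring
    rw [hFt, hKdef, hDeq]
    nlinarith [hsol, hEF, inv_pos.mpr hnd]
  -- Gronwall
  set g : ℝ → ℝ := fun t => F t * Real.exp (-K * t) with hgdef
  have hderiv : ∀ t ∈ Set.Ioo (0:ℝ) T, ∃ D', HasDerivAt g D' t ∧ D' ≤ 0 := by
    intro t ht
    obtain ⟨D, hD, hDle⟩ := key t ht
    have hexp : HasDerivAt (fun s : ℝ => Real.exp (-K * s)) (Real.exp (-K * t) * (-K)) t := by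
      have h1 : HasDerivAt (fun s : ℝ => -K * s) (-K) t := by
        simpa using (hasDerivAt_id t).const_mul (-K)
      exact (Real.hasDerivAt_exp (-K * t)).comp t h1
    refine ⟨_, hD.mul hexp, ?_⟩
    have he := (Real.exp_pos (-K * t)).le
    have h2 : 0 ≤ Real.exp (-K * t) * (K * F t - D) :=
      mul_nonneg he (by linarith)
    nlinarith [h2]
  have hganti : AntitoneOn g (Set.Ioo 0 T) := by
    apply antitoneOn_of_deriv_nonpos (convex_Ioo 0 T)
    · intro t ht
      obtain ⟨D', hD', _⟩ := hderiv t ht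
      exact hD'.continuousAt.continuousWithinAt
    · rw [interior_Ioo]
      intro t ht
      obtain ⟨D', hD', _⟩ := hderiv t ht
      exact hD'.differentiableAt.differentiableWithinAt
    · rw [interior_Ioo]
      intro t ht
      obtain ⟨D', hD', hle⟩ := hderiv t ht
      rw [hD'.deriv]
      exact hle
  intro t ht x hx
  -- F tends to 0 at 0+
  have hF0 : Filter.Tendsto F (nhdsWithin 0 (Set.Ioi 0)) (nhds 0) := by
    have h1 : Filter.Tendsto (fun s => l2norm d n (fun x => max (u s x) 0) ^ 2)
        (nhdsWithin 0 (Set.Ioi 0)) (nhds 0) := by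
      have h2 := hinitnorm.pow 2
      simpa using h2
    apply h1.congr'
    filter_upwards [Ioo_mem_nhdsGT_of_mem (⟨le_refl 0, hT⟩ : (0:ℝ) ∈ Set.Ico 0 T)]
      with s hs
    obtain ⟨hsL2, hsB⟩ := hposL2c s hs
    have h2 : l2normSq d n (fun x => max (u s x) 0) = F s := by
      rw [l2normSq, hFdef]
      congr 1
      refine tsum_eq_sum (s := Bf) (fun x hxx => ?_)
      have h0 : max (u s x) 0 = 0 := hsB x (fun hmemB => hxx ((hmem x).2 hmemB))
      rw [h0]
      ring
    have h3 : 0 ≤ l2normSq d n (fun x => max (u s x) 0) := by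
      rw [l2normSq]
      exact mul_nonneg (by positivity) (tsum_nonneg fun y => sq_nonneg _)
    rw [l2norm, Real.sq_sqrt h3, h2]
  have hglim : Filter.Tendsto g (nhdsWithin 0 (Set.Ioi 0)) (nhds 0) := by
    have hexp : Filter.Tendsto (fun s : ℝ => Real.exp (-K * s))
        (nhdsWithin 0 (Set.Ioi 0)) (nhds 1) := by
      have h1 : Filter.Tendsto (fun s : ℝ => Real.exp (-K * s)) (nhds 0)
          (nhds (Real.exp (-K * 0))) :=
        (Real.continuous_exp.comp (continuous_const.mul continuous_id)).continuousAt
      have h2 : Filter.Tendsto (fun s : ℝ => Real.exp (-K * s))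
          (nhdsWithin 0 (Set.Ioi 0)) (nhds (Real.exp (-K * 0))) :=
        h1.mono_left nhdsWithin_le_nhds
      simpa using h2
    have h3 := hF0.mul hexp
    rw [hgdef]
    simpa using h3
  have hgle : g t ≤ 0 := by
    apply ge_of_tendsto hglim
    filter_upwards [Ioo_mem_nhdsGT_of_mem (⟨le_refl 0, ht.1⟩ : (0:ℝ) ∈ Set.Ico 0 t)]
      with s hs
    exact hganti ⟨hs.1, hs.2.trans ht.2⟩ ht hs.2.le
  have hFt0 : F t ≤ 0 := by
    have he := Real.exp_pos (-K * t)
    have hgt : g t = F t * Real.exp (-K * t) := by rw [hgdef]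
    nlinarith [hgle, hgt, he]
  have hsum0 : ∑ x' ∈ Bf, max (u t x') 0 ^ 2 = 0 := by
    have h1 : 0 ≤ ∑ x' ∈ Bf, max (u t x') 0 ^ 2 :=
      Finset.sum_nonneg fun _ _ => sq_nonneg _
    have h2 : F t = ((n:ℝ)^d)⁻¹ * ∑ x' ∈ Bf, max (u t x') 0 ^ 2 := by rw [hFdef]
    have h3 : (0:ℝ) < ((n:ℝ)^d)⁻¹ := inv_pos.mpr hnd
    nlinarith [hFt0, h2, h3, h1]
  have h4 : max (u t x) 0 ^ 2 = 0 :=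
    (Finset.sum_eq_zero_iff_of_nonneg (fun x' _ => sq_nonneg (max (u t x') 0))).mp
      hsum0 x ((hmem x).2 hx)
  have h5 : max (u t x) 0 = 0 := by
    have := sq_nonneg (max (u t x) 0)
    nlinarith [le_max_right (u t x) 0, le_max_left (u t x) 0, h4]
  calc u t x ≤ max (u t x) 0 := le_max_left _ _
    _ = 0 := h5
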